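/- Let a and b be integers with 0 < a < b and gcd(a, b) = 1, and let K = {0, a, b}. The following are equivalent: (a) K is b-arithmetic in ℤ, i.e. the system A(K) has a nontrivial bounded complex solution; (b) the system A(K) has a nontrivial periodic solution taking values in ℤ; (c) there exists an integer n > 3 and a nonzero function x : ℤ/nℤ → ℂ such that ∑_{s ∈ K} x(g + s̄) = 0 for every g ∈ ℤ/nℤ. -/

import Mathlib

section Aux

lemma sumK {M : Type*} [AddCommMonoid M] {a b : ℕ} (ha : 0 < a) (hab : a < b) (f : ℕ → M) :
    ∑ s ∈ ({0, a, b} : Finset ℕ), f s = f 0 + f a + f b := by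
  rw [show ({0,a,b} : Finset ℕ) = insert 0 (insert a {b}) from rfl,
    Finset.sum_insert (by simp; omega), Finset.sum_insert (by simp; omega),
    Finset.sum_singleton, add_assoc]

lemma cubeLemma {a b : ℕ} (hcop : Nat.Coprime a b) {z : ℂ} (hz : ‖z‖ = 1)
    (hrel : 1 + z ^ a + z ^ b = 0) : z ^ 3 = 1 := by
  have hz0 : z ≠ 0 := by intro h; simp [h] at hz
  set u := z ^ a with hu
  set v := z ^ b with hv
  have hu1 : u * (starRingEnd ℂ) u = 1 := by
    rw [Complex.mul_conj, ← Complex.sq_norm, norm_pow, hz]; norm_num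
  have hv1 : v * (starRingEnd ℂ) v = 1 := by
    rw [Complex.mul_conj, ← Complex.sq_norm, norm_pow, hz]; norm_num
  have hvu : v = -1 - u := by linear_combination hrel
  have hsum : u + (starRingEnd ℂ) u = -1 := by
    have := hv1
    rw [hvu] at this
    simp only [map_sub, map_neg, map_one] at this
    linear_combination this - hu1
  have hquad : u ^ 2 + u + 1 = 0 := by
    have h2 : (starRingEnd ℂ) u = -1 - u := by linear_combination hsum
    rw [h2] at hu1; linear_combination -hu1
  have hvquad : v ^ 2 + v + 1 = 0 := by rw [hvu]; linear_combination hquad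
  have hu3 : u ^ 3 = 1 := by linear_combination (u - 1) * hquad
  have hv3 : v ^ 3 = 1 := by linear_combination (v - 1) * hvquad
  have hwa : (z ^ 3) ^ (a : ℤ) = 1 := by
    rw [← zpow_natCast z 3, ← zpow_mul, mul_comm, zpow_mul, zpow_natCast, zpow_natCast]
    exact hu3
  have hwb : (z ^ 3) ^ (b : ℤ) = 1 := by
    rw [← zpow_natCast z 3, ← zpow_mul, mul_comm, zpow_mul, zpow_natCast, zpow_natCast]
    exact hv3
  have hw0 : z ^ 3 ≠ 0 := pow_ne_zero _ hz0
  have hbez : (a : ℤ) * Nat.gcdA a b + (b : ℤ) * Nat.gcdB a b = 1 := by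
    have := Nat.gcd_eq_gcd_ab a b
    rw [hcop] at this; exact_mod_cast this.symm
  calc z ^ 3 = (z ^ 3) ^ ((a : ℤ) * Nat.gcdA a b + (b : ℤ) * Nat.gcdB a b) := by
        rw [hbez, zpow_one]
    _ = ((z ^ 3) ^ (a : ℤ)) ^ Nat.gcdA a b * ((z ^ 3) ^ (b : ℤ)) ^ Nat.gcdB a b := by
        rw [zpow_add₀ hw0, zpow_mul, zpow_mul]
    _ = 1 := by rw [hwa, hwb]; simp

lemma pow_mod3 {z : ℂ} (hz3 : z ^ 3 = 1) (m : ℕ) : z ^ m = z ^ (m % 3) := by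
  conv_lhs => rw [← Nat.div_add_mod m 3]
  rw [pow_add, pow_mul, hz3, one_pow, one_mul]

lemma constructC {a b : ℕ} (ha : 0 < a) (hab : a < b) {z : ℂ} (hz3 : z ^ 3 = 1)
    (hrel : 1 + z ^ a + z ^ b = 0) :
    ∃ n : ℕ, 3 < n ∧ ∃ x : ZMod n → ℂ, x ≠ 0 ∧
      ∀ g : ZMod n, ∑ s ∈ ({0, a, b} : Finset ℕ), x (g + (s : ZMod n)) = 0 := by
  refine ⟨6, by norm_num, fun g => z ^ g.val, ?_, ?_⟩
  · intro h
    have := congrFun h 0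
    simp [ZMod.val_zero] at this
  · intro g
    have key : ∀ s : ℕ, z ^ (g + (s : ZMod 6)).val = z ^ g.val * z ^ s := by
      intro s
      rw [pow_mod3 hz3 ((g + (s : ZMod 6)).val), ← pow_add, pow_mod3 hz3 (g.val + s)]
      congr 1
      have h1 : (g + (s : ZMod 6)).val = (g.val + s % 6) % 6 := by
        rw [ZMod.val_add, ZMod.val_natCast]
      omega
    rw [sumK ha hab]
    simp only [key]
    linear_combination z ^ g.val * hrel

lemma inj_lemma {a b : ℕ} (ha : 0 < a) (hab : a < b) (x : ℤ → ℂ)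
    (hsol : ∀ n : ℤ, x n + x (n + a) + x (n + b) = 0)
    (hzero : ∀ i : ℤ, 0 ≤ i → i < b → x i = 0) : x = 0 := by
  have up : ∀ m : ℕ, ∀ n : ℤ, 0 ≤ n → n < b + m → x n = 0 := by
    intro m
    induction m with
    | zero => intro n h1 h2; exact hzero n h1 (by omega)
    | succ m ih =>
      intro n h1 h2
      rcases lt_or_ge n (b + m) with h | h
      · exact ih n h1 h
      · have hn : n = (m : ℤ) + b := by omega
        have h0 := hsol m
        rw [ih m (by omega) (by omega),
          ih ((m : ℤ) + a) (by omega) (by omega)] at h0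
        rw [hn]
        linear_combination h0
  have down : ∀ m : ℕ, ∀ n : ℤ, -(m : ℤ) ≤ n → n < b → x n = 0 := by
    intro m
    induction m with
    | zero => intro n h1 h2; exact hzero n h1 h2
    | succ m ih =>
      intro n h1 h2
      rcases le_or_gt (-(m : ℤ)) n with h | h
      · exact ih n h h2
      · have hn : n = -((m : ℤ) + 1) := by omega
        have h0 := hsol n
        rw [ih (n + a) (by omega) (by omega), ih (n + b) (by omega) (by omega)] at h0
        linear_combination h0
  funext n
  rcases le_or_gt 0 n with h | h
  · exact up (n.toNat + 1) n h (by omega)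
  · exact down ((-n).toNat) n (by omega) (by omega)

noncomputable def solW (a b : ℕ) : Submodule ℂ (ℤ → ℂ) where
  carrier := {x | (∃ M : ℝ, ∀ n : ℤ, ‖x n‖ ≤ M) ∧
    ∀ n : ℤ, x n + x (n + a) + x (n + b) = 0}
  add_mem' := by
    rintro x y ⟨⟨Mx, hMx⟩, hx⟩ ⟨⟨My, hMy⟩, hy⟩
    refine ⟨⟨Mx + My, fun n => ?_⟩, fun n => ?_⟩
    · exact (norm_add_le _ _).trans (add_le_add (hMx n) (hMy n))
    · simp only [Pi.add_apply]; linear_combination hx n + hy n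
  zero_mem' := ⟨⟨0, by simp⟩, by simp⟩
  smul_mem' := by
    rintro c x ⟨⟨Mx, hMx⟩, hx⟩
    refine ⟨⟨‖c‖ * Mx, fun n => ?_⟩, fun n => ?_⟩
    · simp only [Pi.smul_apply, smul_eq_mul, norm_mul]
      exact mul_le_mul_of_nonneg_left (hMx n) (norm_nonneg c)
    · simp only [Pi.smul_apply, smul_eq_mul]; linear_combination c * hx n

noncomputable def shiftW (a b : ℕ) : solW a b →ₗ[ℂ] solW a b where
  toFun x := ⟨fun k => x.1 (k + 1), by
    obtain ⟨⟨M, hM⟩, hs⟩ := x.2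
    refine ⟨⟨M, fun n => hM _⟩, fun n => ?_⟩
    have := hs (n + 1)
    rw [show n + 1 + (a : ℤ) = n + a + 1 by ring, show n + 1 + (b : ℤ) = n + b + 1 by ring] at this
    exact this⟩
  map_add' x y := rfl
  map_smul' c x := rfl

noncomputable def projW (a b : ℕ) : solW a b →ₗ[ℂ] (Fin b → ℂ) where
  toFun x := fun i => x.1 (i : ℤ)
  map_add' x y := rfl
  map_smul' c x := rfl

lemma projW_inj {a b : ℕ} (ha : 0 < a) (hab : a < b) :
    Function.Injective (projW a b) := by
  rw [injective_iff_map_eq_zero]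
  intro x hx
  have : x.1 = 0 := by
    apply inj_lemma ha hab x.1 x.2.2
    intro i h1 h2
    have := congrFun hx ⟨i.toNat, by omega⟩
    simpa [projW, show ((i.toNat : ℕ) : ℤ) = i by omega] using this
  exact Subtype.ext this

lemma fd {a b : ℕ} (ha : 0 < a) (hab : a < b) : FiniteDimensional ℂ (solW a b) :=
  FiniteDimensional.of_injective (projW a b) (projW_inj ha hab)

lemma eigen_extract {a b : ℕ} (ha : 0 < a) (hab : a < b) (x : ℤ → ℂ) (hx : x ≠ 0)
    (hbd : ∃ M : ℝ, ∀ n : ℤ, ‖x n‖ ≤ M)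
    (hsol : ∀ n : ℤ, x n + x (n + a) + x (n + b) = 0) :
    ∃ z : ℂ, ‖z‖ = 1 ∧ 1 + z ^ a + z ^ b = 0 := by
  haveI := fd ha hab
  have hxW : (⟨x, hbd, hsol⟩ : solW a b) ≠ 0 := by
    intro h; exact hx (congrArg Subtype.val h)
  haveI : Nontrivial (solW a b) := nontrivial_of_ne _ _ hxW
  obtain ⟨z, hz⟩ := Module.End.exists_eigenvalue (shiftW a b)
  obtain ⟨y, hy⟩ := hz.exists_hasEigenvector
  have hy0 : y.1 ≠ 0 := fun h => hy.right (Subtype.ext h)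
  have hstep : ∀ k : ℤ, y.1 (k + 1) = z * y.1 k := by
    intro k
    have := congrArg Subtype.val hy.apply_eq_smul
    have h2 := congrFun this k
    simpa [shiftW] using h2
  have hz0 : z ≠ 0 := by
    intro h
    apply hy0
    funext k
    have := hstep (k - 1)
    rw [h, zero_mul, sub_add_cancel] at this
    exact this
  have hform : ∀ k : ℤ, y.1 k = y.1 0 * z ^ k := by
    intro k
    induction k using Int.induction_on with
    | zero => simp
    | succ i ih => rw [hstep i, ih, zpow_add_one₀ hz0]; ring
    | pred i ih =>
      have h1 := hstep (-(i : ℤ) - 1)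
      rw [sub_add_cancel, ih] at h1
      refine mul_left_cancel₀ hz0 ?_
      rw [← h1, zpow_sub_one₀ hz0]
      field_simp
  have hy00 : y.1 0 ≠ 0 := by
    intro h
    apply hy0
    funext k
    simp [hform k, h]
  obtain ⟨M, hM⟩ := y.2.1
  have hc : 0 < ‖y.1 0‖ := by
    simpa [norm_pos_iff] using hy00
  set c := ‖y.1 0‖
  have habs : ∀ k : ℤ, c * ‖z‖ ^ k ≤ M := by
    intro k
    have := hM k
    rw [hform k, norm_mul, norm_zpow] at this
    exact this
  have htz : 0 < ‖z‖ := by simpa [norm_pos_iff] using hz0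
  have habs1 : ‖z‖ = 1 := by
    rcases lt_trichotomy (‖z‖) 1 with h | h | h
    · exfalso
      have hti : 1 < (‖z‖)⁻¹ := (one_lt_inv₀ htz).mpr h
      obtain ⟨m, hm⟩ := pow_unbounded_of_one_lt (M / c) hti
      have := habs (-(m : ℤ))
      rw [zpow_neg, zpow_natCast, ← inv_pow] at this
      have hMc : M / c < (‖z‖)⁻¹ ^ m := hm
      rw [div_lt_iff₀ hc] at hMc
      nlinarith
    · exact h
    · exfalso
      obtain ⟨m, hm⟩ := pow_unbounded_of_one_lt (M / c) h
      have := habs (m : ℤ)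
      rw [zpow_natCast] at this
      rw [div_lt_iff₀ hc] at hm
      nlinarith
  refine ⟨z, habs1, ?_⟩
  have h0 := y.2.2 0
  rw [zero_add, zero_add, hform 0, hform (a : ℤ), hform (b : ℤ), zpow_natCast,
    zpow_natCast, zpow_zero] at h0
  have : y.1 0 * (1 + z ^ a + z ^ b) = 0 := by linear_combination h0
  rcases mul_eq_zero.mp this with h | h
  · exact absurd h hy00
  · exact h

lemma mulVec_eq {F : Type*} [Field F] {n a b : ℕ} [NeZero n] (y : ZMod n → F) (g : ZMod n) :
    (Matrix.mulVec (Matrix.of fun g h => (if g = h then (1:F) else 0) +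
      (if g + (a : ZMod n) = h then 1 else 0) + (if g + (b : ZMod n) = h then 1 else 0)) y) g
      = y g + y (g + a) + y (g + b) := by
  simp only [Matrix.mulVec, dotProduct, Matrix.of_apply, add_mul, ite_mul, one_mul,
    zero_mul, Finset.sum_add_distrib, Finset.sum_ite_eq, Finset.mem_univ, if_true]

lemma int_sol_of_complex {n a b : ℕ} (hn : 0 < n) (x : ZMod n → ℂ) (hx : x ≠ 0)
    (hrel : ∀ g : ZMod n, x g + x (g + a) + x (g + b) = 0) :
    ∃ y : ZMod n → ℤ, y ≠ 0 ∧ ∀ g : ZMod n, y g + y (g + a) + y (g + b) = 0 := by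
  haveI : NeZero n := ⟨by omega⟩
  set Mq : Matrix (ZMod n) (ZMod n) ℚ := Matrix.of fun g h => (if g = h then (1:ℚ) else 0) +
      (if g + (a : ZMod n) = h then 1 else 0) + (if g + (b : ZMod n) = h then 1 else 0) with hMq
  set Mc : Matrix (ZMod n) (ZMod n) ℂ := Matrix.of fun g h => (if g = h then (1:ℂ) else 0) +
      (if g + (a : ZMod n) = h then 1 else 0) + (if g + (b : ZMod n) = h then 1 else 0) with hMc
  have hmap : (Rat.castHom ℂ).mapMatrix Mq = Mc := by
    ext g h
    simp [hMq, hMc, apply_ite (Rat.cast : ℚ → ℂ)]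
  have hdetC : Mc.det = 0 := by
    rw [← Matrix.exists_mulVec_eq_zero_iff]
    refine ⟨x, hx, ?_⟩
    funext g
    rw [mulVec_eq]
    exact hrel g
  have hdetQ : Mq.det = 0 := by
    have h1 := RingHom.map_det (Rat.castHom ℂ) Mq
    rw [hmap, hdetC] at h1
    have h2 : ((Mq.det : ℚ) : ℂ) = 0 := by simpa using h1
    exact_mod_cast h2
  obtain ⟨y, hy0, hyv⟩ := Matrix.exists_mulVec_eq_zero_iff.mpr hdetQ
  have hyrel : ∀ g : ZMod n, y g + y (g + a) + y (g + b) = 0 := by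
    intro g
    have := congrFun hyv g
    rwa [mulVec_eq] at this
  set D : ℕ := ∏ g : ZMod n, (y g).den with hD
  have hDpos : 0 < D := Finset.prod_pos fun g _ => (y g).pos
  have hint : ∀ g : ZMod n, ∃ k : ℤ, (k : ℚ) = y g * D := by
    intro g
    have hdvd : (y g).den ∣ D := Finset.dvd_prod_of_mem _ (Finset.mem_univ g)
    refine ⟨(y g).num * (D / (y g).den : ℕ), ?_⟩
    calc (((y g).num * ((D / (y g).den : ℕ) : ℤ) : ℤ) : ℚ)
        = ((y g).num : ℚ) * ((D / (y g).den : ℕ) : ℚ) := by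
          rw [Int.cast_mul, Int.cast_natCast]
      _ = y g * (((y g).den : ℚ) * ((D / (y g).den : ℕ) : ℚ)) := by
          rw [← Rat.mul_den_eq_num]; ring
      _ = y g * ((((y g).den * (D / (y g).den) : ℕ)) : ℚ) := by
          rw [Nat.cast_mul]
      _ = y g * D := by rw [Nat.mul_div_cancel' hdvd]
  choose k hk using hint
  refine ⟨k, ?_, ?_⟩
  · intro h
    obtain ⟨g, hg⟩ := Function.ne_iff.mp hy0
    have := hk g
    rw [h] at this
    simp only [Pi.zero_apply, Int.cast_zero] at this
    exact hg (by
      have hD0 : (D : ℚ) ≠ 0 := by positivity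
      field_simp at this
      simp only [Pi.zero_apply]
      rcases mul_eq_zero.mp this.symm with h' | h'
      · exact h'
      · exact absurd h' hD0)
  · intro g
    have : ((k g + k (g + a) + k (g + b) : ℤ) : ℚ) = 0 := by
      push_cast
      rw [hk g, hk (g + a), hk (g + b)]
      have := hyrel g
      linear_combination (D : ℚ) * this
    exact_mod_cast this

end Aux

/- STATEMENT 6: For coprime integers `0 < a < b` and `K = {0, a, b}`, the following are
equivalent: (a) `A(K)` has a nontrivial bounded complex solution; (b) `A(K)` has a
nontrivial periodic integral solution; (c) for some `n > 3` there is a nonzero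
`x : ℤ/nℤ → ℂ` with `∑_{s ∈ K} x (g + s̄) = 0` for all `g ∈ ℤ/nℤ`. -/
theorem stmt_6 (a b : ℕ) (ha : 0 < a) (hab : a < b) (hgcd : Nat.gcd a b = 1) :
    List.TFAE
      [ ∃ x : ℤ → ℂ, x ≠ 0 ∧ (∃ M : ℝ, ∀ n : ℤ, ‖x n‖ ≤ M) ∧
          ∀ n : ℤ, ∑ s ∈ ({0, a, b} : Finset ℕ), x (n + (s : ℤ)) = 0,
        ∃ x : ℤ → ℤ, x ≠ 0 ∧ (∃ p : ℤ, 1 ≤ p ∧ ∀ n : ℤ, x (n + p) = x n) ∧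
          ∀ n : ℤ, ∑ s ∈ ({0, a, b} : Finset ℕ), x (n + (s : ℤ)) = 0,
        ∃ n : ℕ, 3 < n ∧ ∃ x : ZMod n → ℂ, x ≠ 0 ∧
          ∀ g : ZMod n, ∑ s ∈ ({0, a, b} : Finset ℕ), x (g + (s : ZMod n)) = 0 ] := by
  tfae_have 1 → 3
  · rintro ⟨x, hx, hbd, hsol⟩
    have hsol' : ∀ n : ℤ, x n + x (n + a) + x (n + b) = 0 := by
      intro n
      have := hsol n
      rw [sumK ha hab] at this
      simpa using this
    obtain ⟨z, hz1, hzrel⟩ := eigen_extract ha hab x hx hbd hsol'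
    exact constructC ha hab (cubeLemma hgcd hz1 hzrel) hzrel
  tfae_have 3 → 2
  · rintro ⟨n, hn, x, hx, hrel⟩
    haveI : NeZero n := ⟨by omega⟩
    have hrel' : ∀ g : ZMod n, x g + x (g + a) + x (g + b) = 0 := by
      intro g
      have := hrel g
      rw [sumK ha hab] at this
      simpa using this
    obtain ⟨y, hy0, hyrel⟩ := int_sol_of_complex (by omega) x hx hrel'
    refine ⟨fun m => y ((m : ZMod n)), ?_, ⟨(n : ℤ), by exact_mod_cast Nat.one_le_iff_ne_zero.mpr (by omega), ?_⟩, ?_⟩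
    · intro h
      obtain ⟨g, hg⟩ := Function.ne_iff.mp hy0
      have := congrFun h ((g.val : ℤ))
      simp only [Pi.zero_apply] at this
      apply hg
      rw [show (((g.val : ℤ) : ZMod n)) = g by
        push_cast
        exact ZMod.natCast_rightInverse g] at this
      exact this
    · intro m
      show y _ = y _
      congr 1
      rw [Int.cast_add, Int.cast_natCast, ZMod.natCast_self, add_zero]
    · intro m
      rw [sumK ha hab]
      have := hyrel ((m : ZMod n))
      simpa using this
  tfae_have 2 → 1
  · rintro ⟨x, hx, ⟨p, hp1, hper⟩, hsol⟩
    have hmod : ∀ kk : ℤ, ∀ m : ℤ, x (m + kk * p) = x m := by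
      intro kk
      induction kk using Int.induction_on with
      | zero => intro m; simp
      | succ i ih =>
        intro m
        have : m + ((i : ℤ) + 1) * p = (m + i * p) + p := by ring
        rw [this, hper, ih]
      | pred i ih =>
        intro m
        have h1 := hper (m + (-(i : ℤ) - 1) * p)
        have : m + (-(i : ℤ) - 1) * p + p = m + (-(i : ℤ)) * p := by ring
        rw [this, ih] at h1
        exact h1.symm
    have hp0 : p ≠ 0 := by omega
    have hxn : ∀ n : ℤ, x n = x (n % p) := by
      intro n
      conv_lhs => rw [← Int.emod_add_mul_ediv n p]
      rw [show n % p + p * (n / p) = n % p + (n / p) * p by ring, hmod]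
    refine ⟨fun m => ((x m : ℤ) : ℂ), ?_, ?_, ?_⟩
    · intro h
      obtain ⟨m, hm⟩ := Function.ne_iff.mp hx
      have := congrFun h m
      simp only [Pi.zero_apply, Int.cast_eq_zero] at this
      exact hm this
    · refine ⟨∑ i ∈ Finset.Ico (0 : ℤ) p, |(x i : ℝ)|, fun n => ?_⟩
      rw [Complex.norm_intCast, hxn n]
      have hmem : n % p ∈ Finset.Ico (0 : ℤ) p :=
        Finset.mem_Ico.mpr ⟨Int.emod_nonneg n hp0, Int.emod_lt_of_pos n (by omega)⟩
      have := Finset.single_le_sum (f := fun i => |(x i : ℝ)|)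
        (fun i _ => abs_nonneg _) hmem
      simpa using this
    · intro n
      rw [sumK ha hab]
      have := hsol n
      rw [sumK ha hab] at this
      push_cast
      exact_mod_cast congrArg (fun t : ℤ => (t : ℂ)) this
  tfae_finish
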